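/- Under the hypotheses of the previous setting (X^n i.i.d. ∼ p(x), and the total variation between p(y^n|x^n)∏_q p(x_q) and ∏_q p(x_q)p̂(y_q|x_q) is less than ε < 1/2), for any random variable Q uniformly distributed on [1:n] and independent of (X^n, Y^n), we have I(Y_Q; Q | X_Q) ≤ 2(ε·log|Y| + h_b(ε)). -/

import Mathlib

set_option maxHeartbeats 1000000

open Finset

/-- Total variation distance between two pmfs on a finite set: half the ℓ¹ distance. -/
noncomputable def TV {α : Type*} [Fintype α] (p q : α → ℝ) : ℝ :=
  (∑ a, |p a - q a|) / 2

/-- Shannon entropy of a pmf. -/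
noncomputable def ent {α : Type*} [Fintype α] (p : α → ℝ) : ℝ :=
  -∑ a, p a * Real.log (p a)

/-- Binary entropy function. -/
noncomputable def hb (t : ℝ) : ℝ := -t * Real.log t - (1 - t) * Real.log (1 - t)

/-- `p` is a probability mass function. -/
def IsPMF {α : Type*} [Fintype α] (p : α → ℝ) : Prop :=
  (∀ a, 0 ≤ p a) ∧ ∑ a, p a = 1

/-- Pushforward pmf (distribution of the random variable `X` under `μ`). -/
noncomputable def pushf {Ω α : Type*} [Fintype Ω] [DecidableEq α]
    (μ : Ω → ℝ) (X : Ω → α) : α → ℝ :=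
  fun a => ∑ ω ∈ Finset.univ.filter (fun ω => X ω = a), μ ω

/-- Entropy of a random variable `X` on a finite probability space with pmf `μ`. -/
noncomputable def Hent {Ω α : Type*} [Fintype Ω] [Fintype α] [DecidableEq α]
    (μ : Ω → ℝ) (X : Ω → α) : ℝ := ent (pushf μ X)

/-- Conditional mutual information `I(A ; C | B)` of random variables on a finite
probability space with pmf `μ`, defined via entropies:
`I(A;C|B) = H(A,B) + H(B,C) - H(A,B,C) - H(B)`. -/
noncomputable def condMI {Ω α β γ : Type*} [Fintype Ω] [Fintype α] [Fintype β] [Fintype γ]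
    [DecidableEq α] [DecidableEq β] [DecidableEq γ]
    (μ : Ω → ℝ) (A : Ω → α) (B : Ω → β) (C : Ω → γ) : ℝ :=
  Hent μ (fun ω => (A ω, B ω)) + Hent μ (fun ω => (B ω, C ω))
    - Hent μ (fun ω => (A ω, B ω, C ω)) - Hent μ B

namespace CMIAux

lemma ent_eq {α : Type*} [Fintype α] (p : α → ℝ) :
    ent p = ∑ a, Real.negMulLog (p a) := by
  simp [ent, Real.negMulLog, neg_mul, Finset.sum_neg_distrib]

lemma hb_eq (t : ℝ) : hb t = Real.binEntropy t := by
  rw [Real.binEntropy_eq_negMulLog_add_negMulLog_one_sub]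
  simp [hb, Real.negMulLog]; ring

lemma hb_eq' (t : ℝ) : hb t = Real.negMulLog t + Real.negMulLog (1 - t) := by
  rw [hb_eq, Real.binEntropy_eq_negMulLog_add_negMulLog_one_sub]

lemma negMulLog_add_le {x y : ℝ} (hx : 0 ≤ x) (hy : 0 ≤ y) :
    Real.negMulLog (x + y) ≤ Real.negMulLog x + Real.negMulLog y := by
  rcases eq_or_lt_of_le hx with h | hx'
  · simp [← h]
  rcases eq_or_lt_of_le hy with h | hy'
  · simp [← h]
  have h1 : Real.log x ≤ Real.log (x + y) := Real.log_le_log hx' (by linarith)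
  have h2 : Real.log y ≤ Real.log (x + y) := Real.log_le_log hy' (by linarith)
  simp only [Real.negMulLog, neg_mul]
  nlinarith [mul_le_mul_of_nonneg_left h1 hx, mul_le_mul_of_nonneg_left h2 hy]

lemma negMulLog_sum_le {ι : Type*} (s : Finset ι) (f : ι → ℝ) (hf : ∀ i ∈ s, 0 ≤ f i) :
    Real.negMulLog (∑ i ∈ s, f i) ≤ ∑ i ∈ s, Real.negMulLog (f i) := by
  classical
  induction s using Finset.induction with
  | empty => simp
  | insert _ _ hnot ih =>
    rename_i a s
    rw [Finset.sum_insert hnot, Finset.sum_insert hnot]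
    calc Real.negMulLog (f a + ∑ i ∈ s, f i)
        ≤ Real.negMulLog (f a) + Real.negMulLog (∑ i ∈ s, f i) :=
          negMulLog_add_le (hf a (Finset.mem_insert_self a s))
            (Finset.sum_nonneg fun i hi => hf i (Finset.mem_insert_of_mem hi))
      _ ≤ _ := by
          have := ih (fun i hi => hf i (Finset.mem_insert_of_mem hi))
          linarith

lemma sum_negMulLog_le_log_card {α : Type*} [Fintype α] [Nonempty α] {p : α → ℝ}
    (h0 : ∀ a, 0 ≤ p a) (h1 : ∑ a, p a = 1) :
    ∑ a, Real.negMulLog (p a) ≤ Real.log (Fintype.card α) := by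
  have hd : (0:ℝ) < Fintype.card α := by
    exact_mod_cast Fintype.card_pos
  have h := Real.concaveOn_negMulLog.le_map_sum (t := Finset.univ)
      (w := fun _ : α => ((Fintype.card α : ℝ))⁻¹) (p := p)
      (fun i _ => by positivity)
      (by rw [Finset.sum_const, Finset.card_univ, nsmul_eq_mul]; field_simp)
      (fun i _ => h0 i)
  simp only [smul_eq_mul, ← Finset.mul_sum, h1, mul_one] at h
  have h3 : Real.negMulLog ((Fintype.card α : ℝ))⁻¹
      = (Fintype.card α : ℝ)⁻¹ * Real.log (Fintype.card α) := by
    simp [Real.negMulLog, Real.log_inv]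
  rw [h3] at h
  calc ∑ i, Real.negMulLog (p i)
      = (Fintype.card α : ℝ) * ((Fintype.card α : ℝ)⁻¹ * ∑ i, Real.negMulLog (p i)) := by
        field_simp
    _ ≤ (Fintype.card α : ℝ) * ((Fintype.card α : ℝ)⁻¹ * Real.log (Fintype.card α)) :=
        mul_le_mul_of_nonneg_left h (le_of_lt hd)
    _ = Real.log (Fintype.card α) := by field_simp

/-- lower marginal bound -/
lemma marg_le_sum_negMulLog {β α : Type*} [Fintype α] [Fintype β] (w : β × α → ℝ)
    (hw : ∀ c, 0 ≤ w c) :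
    ∑ a, Real.negMulLog (∑ b, w (b, a)) ≤ ∑ c, Real.negMulLog (w c) := by
  rw [Fintype.sum_prod_type_right]
  exact Finset.sum_le_sum fun a _ => negMulLog_sum_le _ _ (fun b _ => hw (b, a))

/-- upper marginal bound -/
lemma sum_negMulLog_le_marg {β α : Type*} [Fintype α] [Fintype β] (w : β × α → ℝ)
    (hw : ∀ c, 0 ≤ w c) :
    ∑ c, Real.negMulLog (w c)
      ≤ ∑ a, Real.negMulLog (∑ b, w (b, a)) + (∑ c, w c) * Real.log (Fintype.card β) := by
  rw [Fintype.sum_prod_type_right, Fintype.sum_prod_type_right, Finset.sum_mul,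
    ← Finset.sum_add_distrib]
  refine Finset.sum_le_sum fun a _ => ?_
  set s : ℝ := ∑ b, w (b, a) with hs
  rcases eq_or_lt_of_le (Finset.sum_nonneg (fun b _ => hw (b, a)) : 0 ≤ s) with h0 | hpos
  · have hz : ∀ b, w (b, a) = 0 := by
      intro b
      have := (Finset.sum_eq_zero_iff_of_nonneg (fun b _ => hw (b, a))).1 h0.symm
      exact this b (Finset.mem_univ b)
    have hs0 : s = 0 := by rw [hs, ← h0]
    simp [hz, hs0]
  · have hne : Nonempty β := by
      by_contra h
      rw [not_nonempty_iff] at h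
      simp at hpos
    have key : ∀ b, w (b, a) = s * (w (b, a) / s) := by
      intro b; field_simp [show s ≠ 0 from hpos.ne']
    calc ∑ b, Real.negMulLog (w (b, a))
        = ∑ b, ((w (b, a) / s) * Real.negMulLog s + s * Real.negMulLog (w (b, a) / s)) := by
          refine Finset.sum_congr rfl fun b _ => ?_
          conv_lhs => rw [key b]
          rw [Real.negMulLog_mul]
      _ = Real.negMulLog s + s * ∑ b, Real.negMulLog (w (b, a) / s) := by
          rw [Finset.sum_add_distrib, ← Finset.sum_mul, ← Finset.mul_sum, ← Finset.sum_div]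
          rw [← hs]
          field_simp [show s ≠ 0 from hpos.ne']
      _ ≤ Real.negMulLog s + s * Real.log (Fintype.card β) := by
          have := sum_negMulLog_le_log_card (α := β) (p := fun b => w (b, a) / s)
            (fun b => div_nonneg (hw _) hpos.le)
            (by rw [← Finset.sum_div, ← hs]; exact div_self (show s ≠ 0 from hpos.ne'))
          nlinarith

/-- KEY LEMMA: entropy continuity for joint distributions with equal second marginals. -/
lemma ent_sub_ent_le {β α : Type*} [Fintype α] [Fintype β] {J K : β × α → ℝ}
    (hJ : IsPMF J) (hK : IsPMF K) (hmarg : ∀ a, ∑ b, J (b, a) = ∑ b, K (b, a)) :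
    ent J - ent K ≤ TV J K * Real.log (Fintype.card β) + hb (TV J K) := by
  classical
  set t := TV J K with ht
  set m : β × α → ℝ := fun c => min (J c) (K c) with hm
  set A : β × α → ℝ := fun c => J c - m c with hA
  set B : β × α → ℝ := fun c => K c - m c with hB
  have hA0 : ∀ c, 0 ≤ A c := fun c => by simp [hA, hm]
  have hB0 : ∀ c, 0 ≤ B c := fun c => by simp [hB, hm]
  have hm0 : ∀ c, 0 ≤ m c := fun c => le_min (hJ.1 c) (hK.1 c)
  have habs : ∀ c, |J c - K c| = A c + B c := by
    intro c; simp only [hA, hB, hm]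
    rcases le_total (J c) (K c) with h | h
    · rw [abs_of_nonpos (by linarith), min_eq_left h]; ring
    · rw [abs_of_nonneg (by linarith), min_eq_right h]; ring
  have hsumJK : ∑ c, A c - ∑ c, B c = 0 := by
    simp only [hA, hB]
    rw [Finset.sum_sub_distrib, Finset.sum_sub_distrib, hJ.2, hK.2]
    ring
  have hAB : ∑ c, A c + ∑ c, B c = 2 * t := by
    rw [← Finset.sum_add_distrib]
    have h2 : ∑ c, (A c + B c) = ∑ c, |J c - K c| :=
      Finset.sum_congr rfl fun c _ => (habs c).symm
    rw [h2, ht]; simp only [TV]; ring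
  have hsumA : ∑ c, A c = t := by linarith
  have hsumB : ∑ c, B c = t := by linarith
  have hsumm : ∑ c, m c = 1 - t := by
    have : ∑ c, A c = ∑ c, J c - ∑ c, m c := by
      simp only [hA]; rw [Finset.sum_sub_distrib]
    rw [hJ.2] at this; linarith
  have ht0 : 0 ≤ t := by
    rw [← hsumA]; exact Finset.sum_nonneg fun c _ => hA0 c
  have ht1 : t ≤ 1 := by
    have := Finset.sum_nonneg (fun c (_ : c ∈ univ) => hm0 c)
    rw [hsumm] at this; linarith
  have hmargA : ∀ a, ∑ b, A (b, a) = ∑ b, B (b, a) := by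
    intro a
    simp only [hA, hB]
    rw [Finset.sum_sub_distrib, Finset.sum_sub_distrib, hmarg a]
  rcases eq_or_lt_of_le ht0 with h0 | htpos
  · have hJA : ∀ c, A c = 0 := by
      intro c
      have := (Finset.sum_eq_zero_iff_of_nonneg (fun c _ => hA0 c)).1 (by rw [hsumA, ← h0])
      exact this c (Finset.mem_univ c)
    have hJB : ∀ c, B c = 0 := by
      intro c
      have := (Finset.sum_eq_zero_iff_of_nonneg (fun c _ => hB0 c)).1 (by rw [hsumB, ← h0])
      exact this c (Finset.mem_univ c)
    have : J = K := by
      funext c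
      have h1 := hJA c; have h2 := hJB c
      simp only [hA, hB] at h1 h2
      linarith
    rw [this, ← h0, hb_eq]
    simp
  rcases eq_or_lt_of_le ht1 with h1 | htlt
  · have e1 : ent J ≤ ∑ a, Real.negMulLog (∑ b, J (b, a)) + Real.log (Fintype.card β) := by
      rw [ent_eq]
      have := sum_negMulLog_le_marg J hJ.1
      rw [hJ.2, one_mul] at this
      exact this
    have e2 : ∑ a, Real.negMulLog (∑ b, K (b, a)) ≤ ent K := by
      rw [ent_eq]; exact marg_le_sum_negMulLog K hK.1
    have e3 : ∑ a, Real.negMulLog (∑ b, J (b, a)) = ∑ a, Real.negMulLog (∑ b, K (b, a)) := by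
      exact Finset.sum_congr rfl fun a _ => by rw [hmarg a]
    rw [h1, hb_eq]
    simp only [Real.binEntropy_one]
    linarith
  have h1t : (1:ℝ) - t ≠ 0 := by linarith
  have htne : t ≠ 0 := ne_of_gt htpos
  set Mt : β × α → ℝ := fun c => m c / (1 - t) with hMt
  set At : β × α → ℝ := fun c => A c / t with hAt
  set Bt : β × α → ℝ := fun c => B c / t with hBt
  have hMt0 : ∀ c, 0 ≤ Mt c := fun c => div_nonneg (hm0 c) (by linarith)
  have hAt0 : ∀ c, 0 ≤ At c := fun c => div_nonneg (hA0 c) ht0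
  have hBt0 : ∀ c, 0 ≤ Bt c := fun c => div_nonneg (hB0 c) ht0
  have hMt1 : ∑ c, Mt c = 1 := by
    simp only [hMt]; rw [← Finset.sum_div, hsumm]; field_simp
  have hAt1 : ∑ c, At c = 1 := by
    simp only [hAt]; rw [← Finset.sum_div, hsumA]; field_simp
  have hBt1 : ∑ c, Bt c = 1 := by
    simp only [hBt]; rw [← Finset.sum_div, hsumB]; field_simp
  have hmdecomp : ∀ c, m c = (1 - t) * Mt c := by
    intro c; simp only [hMt]; field_simp
  have hAdecomp : ∀ c, A c = t * At c := by
    intro c; simp only [hAt]; field_simp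
  have hBdecomp : ∀ c, B c = t * Bt c := by
    intro c; simp only [hBt]; field_simp
  have step1 : ent J ≤ (1 - t) * ∑ c, Real.negMulLog (Mt c) + t * ∑ c, Real.negMulLog (At c)
      + hb t := by
    rw [ent_eq]
    have e1 : ∀ c, Real.negMulLog (J c) ≤ Real.negMulLog (m c) + Real.negMulLog (A c) := by
      intro c
      have : J c = m c + A c := by simp only [hA]; ring
      rw [this]
      exact negMulLog_add_le (hm0 c) (hA0 c)
    have e2 : ∑ c, Real.negMulLog (m c)
        = Real.negMulLog (1 - t) + (1 - t) * ∑ c, Real.negMulLog (Mt c) := by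
      have : ∀ c, Real.negMulLog (m c)
          = Mt c * Real.negMulLog (1 - t) + (1 - t) * Real.negMulLog (Mt c) := by
        intro c; rw [hmdecomp c, Real.negMulLog_mul]
      rw [Finset.sum_congr rfl fun c _ => this c, Finset.sum_add_distrib,
        ← Finset.sum_mul, hMt1, ← Finset.mul_sum]
      ring
    have e3 : ∑ c, Real.negMulLog (A c)
        = Real.negMulLog t + t * ∑ c, Real.negMulLog (At c) := by
      have : ∀ c, Real.negMulLog (A c)
          = At c * Real.negMulLog t + t * Real.negMulLog (At c) := by
        intro c; rw [hAdecomp c, Real.negMulLog_mul]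
      rw [Finset.sum_congr rfl fun c _ => this c, Finset.sum_add_distrib,
        ← Finset.sum_mul, hAt1, ← Finset.mul_sum]
      ring
    calc ∑ c, Real.negMulLog (J c)
        ≤ ∑ c, (Real.negMulLog (m c) + Real.negMulLog (A c)) :=
          Finset.sum_le_sum fun c _ => e1 c
      _ = (1 - t) * ∑ c, Real.negMulLog (Mt c) + t * ∑ c, Real.negMulLog (At c) + hb t := by
          rw [Finset.sum_add_distrib, e2, e3, hb_eq']
          ring
  have step2 : (1 - t) * ∑ c, Real.negMulLog (Mt c) + t * ∑ c, Real.negMulLog (Bt c)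
      ≤ ent K := by
    rw [ent_eq]
    have e1 : ∀ c, (1 - t) * Real.negMulLog (Mt c) + t * Real.negMulLog (Bt c)
        ≤ Real.negMulLog (K c) := by
      intro c
      have hKc : K c = (1 - t) * Mt c + t * Bt c := by
        rw [← hmdecomp c, ← hBdecomp c]; simp only [hB]; ring
      rw [hKc]
      have := Real.concaveOn_negMulLog.2 (Set.mem_Ici.2 (hMt0 c)) (Set.mem_Ici.2 (hBt0 c))
        (by linarith : (0:ℝ) ≤ 1 - t) ht0 (by ring)
      simpa using this
    calc (1 - t) * ∑ c, Real.negMulLog (Mt c) + t * ∑ c, Real.negMulLog (Bt c)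
        = ∑ c, ((1 - t) * Real.negMulLog (Mt c) + t * Real.negMulLog (Bt c)) := by
          rw [Finset.sum_add_distrib, Finset.mul_sum, Finset.mul_sum]
      _ ≤ ∑ c, Real.negMulLog (K c) := Finset.sum_le_sum fun c _ => e1 c
  have step3 : ∑ c, Real.negMulLog (At c) - ∑ c, Real.negMulLog (Bt c)
      ≤ Real.log (Fintype.card β) := by
    have e1 := sum_negMulLog_le_marg At hAt0
    rw [hAt1, one_mul] at e1
    have e2 := marg_le_sum_negMulLog Bt hBt0
    have e3 : ∀ a, ∑ b, At (b, a) = ∑ b, Bt (b, a) := by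
      intro a
      simp only [hAt, hBt]
      rw [← Finset.sum_div, ← Finset.sum_div, hmargA a]
    have e4 : ∑ a, Real.negMulLog (∑ b, At (b, a)) = ∑ a, Real.negMulLog (∑ b, Bt (b, a)) :=
      Finset.sum_congr rfl fun a _ => by rw [e3 a]
    linarith
  nlinarith [step1, step2, step3, htpos]

lemma pushf_eq {Ω α : Type*} [Fintype Ω] [DecidableEq α] (μ : Ω → ℝ) (X : Ω → α) (a : α) :
    pushf μ X a = ∑ ω, if X ω = a then μ ω else 0 := by
  rw [pushf, Finset.sum_filter]

lemma sum_pushf {Ω α : Type*} [Fintype Ω] [Fintype α] [DecidableEq α] (μ : Ω → ℝ) (X : Ω → α) :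
    ∑ a, pushf μ X a = ∑ ω, μ ω := by
  simp only [pushf_eq]
  rw [Finset.sum_comm]
  refine Finset.sum_congr rfl fun ω _ => ?_
  simp

lemma pushf_pmf {Ω α : Type*} [Fintype Ω] [Fintype α] [DecidableEq α] {μ : Ω → ℝ}
    (hμ : (∀ ω, 0 ≤ μ ω) ∧ ∑ ω, μ ω = 1) (X : Ω → α) : IsPMF (pushf μ X) := by
  constructor
  · intro a
    exact Finset.sum_nonneg fun ω _ => hμ.1 ω
  · rw [sum_pushf, hμ.2]

lemma TV_nonneg {α : Type*} [Fintype α] (p q : α → ℝ) : 0 ≤ TV p q :=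
  div_nonneg (Finset.sum_nonneg fun a _ => abs_nonneg _) (by norm_num)

lemma TV_pushf_le {Ω α : Type*} [Fintype Ω] [Fintype α] [DecidableEq α]
    (μ ν : Ω → ℝ) (X : Ω → α) : TV (pushf μ X) (pushf ν X) ≤ TV μ ν := by
  unfold TV
  have h : ∑ a, |pushf μ X a - pushf ν X a| ≤ ∑ ω, |μ ω - ν ω| := by
    calc ∑ a, |pushf μ X a - pushf ν X a|
        = ∑ a, |∑ ω ∈ Finset.univ.filter (fun ω => X ω = a), (μ ω - ν ω)| := by
          refine Finset.sum_congr rfl fun a _ => ?_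
          simp only [pushf]; rw [← Finset.sum_sub_distrib]
      _ ≤ ∑ a, ∑ ω ∈ Finset.univ.filter (fun ω => X ω = a), |μ ω - ν ω| :=
          Finset.sum_le_sum fun a _ => Finset.abs_sum_le_sum_abs _ _
      _ = ∑ ω, |μ ω - ν ω| := Finset.sum_fiberwise _ _ _
  linarith

/-- key marginalization lemma -/
lemma sum_prod_filter_eq {S : Type*} [Fintype S] [DecidableEq S] {n : ℕ} (g : S → ℝ)
    (hg : ∑ s, g s = 1) (q : Fin n) (s₀ : S) :
    ∑ h : Fin n → S, (if h q = s₀ then ∏ i, g (h i) else 0) = g s₀ := by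
  classical
  have key : ∀ h : Fin n → S, ∏ i, g (h i) = g (h q) * ∏ j : {j // j ≠ q}, g (h j) := by
    intro h
    rw [← Finset.mul_prod_erase Finset.univ (fun i => g (h i)) (Finset.mem_univ q)]
    congr 1
    rw [← Finset.prod_subtype (Finset.univ.erase q) (fun i => by simp) (fun i => g (h i))]
  calc ∑ h : Fin n → S, (if h q = s₀ then ∏ i, g (h i) else 0)
      = ∑ sk : S × ({j : Fin n // j ≠ q} → S),
          (if sk.1 = s₀ then g sk.1 * ∏ j, g (sk.2 j) else 0) := by
        refine Fintype.sum_equiv (Equiv.funSplitAt q S) _ _ fun h => ?_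
        simp only [Equiv.funSplitAt_apply]
        rw [key h]
    _ = g s₀ := by
        rw [Fintype.sum_prod_type]
        have inner : ∀ s : S, ∑ k : {j : Fin n // j ≠ q} → S,
            (if s = s₀ then g s * ∏ j, g (k j) else 0)
            = if s = s₀ then g s else 0 := by
          intro s
          by_cases hs : s = s₀
          · simp only [hs, eq_self_iff_true, if_true]
            rw [← Finset.mul_sum]
            have : ∑ k : {j : Fin n // j ≠ q} → S, ∏ j, g (k j) = 1 := by
              rw [← Fintype.prod_sum fun (_ : {j : Fin n // j ≠ q}) (s : S) => g s]
              simp [hg]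
            rw [this, mul_one]
          · simp [hs]
        rw [Finset.sum_congr rfl fun s _ => inner s]
        simp

lemma sum_negMulLog_div {α : Type*} [Fintype α] {n : ℕ} (hn : 0 < n) (w : α → ℝ)
    (hw : ∑ a, w a = 1) :
    ∑ a, Real.negMulLog (w a / n)
      = (∑ a, Real.negMulLog (w a)) / n + Real.log n / n := by
  have hnR : (0:ℝ) < n := by exact_mod_cast hn
  have h1 : ∀ a, Real.negMulLog (w a / n)
      = (n:ℝ)⁻¹ * Real.negMulLog (w a) + w a * Real.negMulLog ((n:ℝ)⁻¹) := by
    intro a; rw [div_eq_mul_inv, Real.negMulLog_mul]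
  rw [Finset.sum_congr rfl fun a _ => h1 a, Finset.sum_add_distrib, ← Finset.mul_sum,
    ← Finset.sum_mul, hw, one_mul]
  have h2 : Real.negMulLog ((n:ℝ)⁻¹) = Real.log n / n := by
    simp [Real.negMulLog, Real.log_inv]
    field_simp
  rw [h2]
  field_simp

lemma f_mono {d : ℕ} (hd : 1 ≤ d) {t e : ℝ} (h0 : 0 ≤ t) (hte : t ≤ e) (he : e < 1/2) :
    t * Real.log d + hb t ≤ e * Real.log d + hb e := by
  have hlog : 0 ≤ Real.log d := Real.log_nonneg (by exact_mod_cast hd)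
  have hmono : hb t ≤ hb e := by
    rw [hb_eq, hb_eq]
    refine Real.binEntropy_strictMonoOn.monotoneOn ⟨h0, ?_⟩ ⟨by linarith, ?_⟩ hte
    · rw [show ((2:ℝ))⁻¹ = 1/2 by norm_num]; linarith
    · rw [show ((2:ℝ))⁻¹ = 1/2 by norm_num]; linarith
  nlinarith

end CMIAux

open CMIAux in
/-- Under the hypotheses of Statement 7, for `Q` uniform on `[1:n]`
and independent of `(X^n, Y^n)` (realized on the extended space `Fin n × Ω` with
pmf `μ'(q,ω) = μ(ω)/n`), we have `I(Y_Q; Q | X_Q) ≤ 2(ε·log|Y| + h_b(ε))`. -/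
theorem condMI_randomized_index_bound {n : ℕ} {𝒳 𝒴 : Type*} [Fintype 𝒳] [Fintype 𝒴]
    [DecidableEq 𝒳] [DecidableEq 𝒴] (hn : 0 < n)
    (p : 𝒳 → ℝ) (V : (Fin n → 𝒳) → (Fin n → 𝒴) → ℝ) (phat : 𝒴 → 𝒳 → ℝ) (ε : ℝ)
    (hp : IsPMF p)
    (hV : ∀ x, (∀ y, 0 ≤ V x y) ∧ ∑ y, V x y = 1)
    (hphat : ∀ x, (∀ y, 0 ≤ phat y x) ∧ ∑ y, phat y x = 1)
    (hε : ε < 1/2)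
    (hTV : TV (fun ω : (Fin n → 𝒳) × (Fin n → 𝒴) => (∏ q, p (ω.1 q)) * V ω.1 ω.2)
        (fun ω => ∏ q, p (ω.1 q) * phat (ω.2 q) (ω.1 q)) < ε) :
    condMI (fun z : Fin n × ((Fin n → 𝒳) × (Fin n → 𝒴)) =>
          ((∏ i, p (z.2.1 i)) * V z.2.1 z.2.2) / n)
        (fun z => z.2.2 z.1) (fun z => z.2.1 z.1) (fun z => z.1)
      ≤ 2 * (ε * Real.log (Fintype.card 𝒴) + hb ε) := by
  classical
  set μ : (Fin n → 𝒳) × (Fin n → 𝒴) → ℝ :=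
    fun ω => (∏ i, p (ω.1 i)) * V ω.1 ω.2 with hμdef
  set π : (Fin n → 𝒳) × (Fin n → 𝒴) → ℝ :=
    fun ω => ∏ i, p (ω.1 i) * phat (ω.2 i) (ω.1 i) with hπdef
  -- nonemptiness
  have hX : Nonempty 𝒳 := by
    by_contra h
    rw [not_nonempty_iff] at h
    have := hp.2
    simp at this
  have hY : Nonempty 𝒴 := by
    by_contra h
    rw [not_nonempty_iff] at h
    have hfe : IsEmpty (Fin n → 𝒴) := ⟨fun f => h.false (f ⟨0, hn⟩)⟩
    have h2 := (hV (fun _ => Classical.arbitrary 𝒳)).2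
    simp at h2
  -- basic positivity
  have hTVμπ : TV μ π < ε := hTV
  have hε0 : 0 < ε := lt_of_le_of_lt (TV_nonneg μ π) hTVμπ
  -- pmf facts
  have hsum_prod_p : ∑ x : Fin n → 𝒳, ∏ i, p (x i) = 1 := by
    rw [← Fintype.prod_sum fun (_ : Fin n) (u : 𝒳) => p u]
    simp [hp.2]
  have hμpmf : (∀ ω, 0 ≤ μ ω) ∧ ∑ ω, μ ω = 1 := by
    constructor
    · intro ω
      exact mul_nonneg (Finset.prod_nonneg fun i _ => hp.1 _) ((hV ω.1).1 ω.2)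
    · rw [Fintype.sum_prod_type]
      have : ∀ x : Fin n → 𝒳, ∑ y, μ (x, y) = ∏ i, p (x i) := by
        intro x
        rw [hμdef]
        simp only
        rw [← Finset.mul_sum, (hV x).2, mul_one]
      rw [Finset.sum_congr rfl fun x _ => this x, hsum_prod_p]
  -- the single-letter coupling g on 𝒳 × 𝒴
  set g : 𝒳 × 𝒴 → ℝ := fun c => p c.1 * phat c.2 c.1 with hgdef
  have hg1 : ∑ c, g c = 1 := by
    rw [Fintype.sum_prod_type]
    have : ∀ u : 𝒳, ∑ v, g (u, v) = p u := by
      intro u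
      rw [hgdef]
      simp only
      rw [← Finset.mul_sum, (hphat u).2, mul_one]
    rw [Finset.sum_congr rfl fun u _ => this u, hp.2]
  -- single-letter distributions
  set Jq : Fin n → (𝒴 × 𝒳) → ℝ := fun q => pushf μ (fun ω => (ω.2 q, ω.1 q)) with hJqdef
  set K : (𝒴 × 𝒳) → ℝ := fun c => p c.2 * phat c.1 c.2 with hKdef
  -- pushforward of π is K
  have hKpush : ∀ q : Fin n, pushf π (fun ω => (ω.2 q, ω.1 q)) = K := by
    intro q
    funext c
    rw [pushf_eq]
    have heq : ∀ h : Fin n → 𝒳 × 𝒴,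
        (if (((h q).2 : 𝒴), ((h q).1 : 𝒳)) = c then ∏ i, p ((h i).1) * phat ((h i).2) ((h i).1)
          else 0)
        = if h q = (c.2, c.1) then ∏ i, g (h i) else 0 := by
      intro h
      refine if_congr ?_ rfl rfl
      constructor
      · intro hh
        have h1 : (h q).2 = c.1 := congrArg Prod.fst hh
        have h2 : (h q).1 = c.2 := congrArg Prod.snd hh
        exact Prod.ext h2 h1
      · intro hh
        have h1 : (h q).1 = c.2 := congrArg Prod.fst hh
        have h2 : (h q).2 = c.1 := congrArg Prod.snd hh
        rw [h1, h2]
    calc ∑ ω : (Fin n → 𝒳) × (Fin n → 𝒴), (if ((ω.2 q, ω.1 q) : 𝒴 × 𝒳) = c then π ω else 0)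
        = ∑ h : Fin n → 𝒳 × 𝒴, (if h q = (c.2, c.1) then ∏ i, g (h i) else 0) := by
          refine (Fintype.sum_equiv (Equiv.arrowProdEquivProdArrow (Fin n) (fun _ => 𝒳) (fun _ => 𝒴)) _ _
            fun h => ?_).symm
          rw [← heq h]
          rfl
      _ = g (c.2, c.1) := sum_prod_filter_eq g hg1 q (c.2, c.1)
      _ = K c := rfl
  -- marginals
  have hmargJ' : ∀ (q : Fin n) (b : 𝒳), (∑ ω, if ω.1 q = b then μ ω else 0) = p b := by
    intro q b
    rw [Fintype.sum_prod_type]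
    have h1 : ∀ x : Fin n → 𝒳, (∑ y, if x q = b then μ (x, y) else 0)
        = if x q = b then ∏ i, p (x i) else 0 := by
      intro x
      by_cases hx : x q = b
      · simp only [hx, if_true]
        rw [hμdef]
        simp only
        rw [← Finset.mul_sum, (hV x).2, mul_one]
      · simp [hx]
    rw [Finset.sum_congr rfl fun x _ => h1 x]
    exact sum_prod_filter_eq p hp.2 q b
  have hmargJ : ∀ (q : Fin n) (b : 𝒳), ∑ a, Jq q (a, b) = p b := by
    intro q b
    have h1 : ∀ a, Jq q (a, b) = ∑ ω, if ((ω.2 q, ω.1 q) : 𝒴 × 𝒳) = (a, b) then μ ω else 0 := by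
      intro a; rw [hJqdef]; exact pushf_eq μ _ (a, b)
    rw [Finset.sum_congr rfl fun a _ => h1 a, Finset.sum_comm]
    rw [← hmargJ' q b]
    refine Finset.sum_congr rfl fun ω _ => ?_
    by_cases hx : ω.1 q = b
    · simp [Prod.ext_iff, hx]
    · simp [Prod.ext_iff, hx]
  have hmargK : ∀ b : 𝒳, ∑ a, K (a, b) = p b := by
    intro b
    rw [hKdef]
    simp only
    rw [← Finset.mul_sum, (hphat b).2, mul_one]
  have hKpmf : IsPMF K := by
    constructor
    · intro c
      exact mul_nonneg (hp.1 _) ((hphat _).1 _)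
    · rw [Fintype.sum_prod_type_right]
      rw [Finset.sum_congr rfl fun b _ => hmargK b, hp.2]
  have hJqpmf : ∀ q, IsPMF (Jq q) := fun q => pushf_pmf hμpmf _
  have hTVq : ∀ q : Fin n, TV (Jq q) K < ε := by
    intro q
    calc TV (Jq q) K = TV (pushf μ (fun ω => (ω.2 q, ω.1 q)))
          (pushf π (fun ω => (ω.2 q, ω.1 q))) := by rw [hKpush q]
      _ ≤ TV μ π := TV_pushf_le μ π _
      _ < ε := hTVμπ
  -- averaged distribution
  set Jbar : (𝒴 × 𝒳) → ℝ := fun c => (∑ q, Jq q c) / n with hJbardef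
  have hnR : (0:ℝ) < n := by exact_mod_cast hn
  have hJbarpmf : IsPMF Jbar := by
    constructor
    · intro c
      exact div_nonneg (Finset.sum_nonneg fun q _ => (hJqpmf q).1 c) hnR.le
    · rw [hJbardef]
      simp only
      rw [← Finset.sum_div, Finset.sum_comm]
      rw [Finset.sum_congr rfl fun q (_ : q ∈ univ) => (hJqpmf q).2]
      simp
      exact_mod_cast hnR.ne'
  have hmargJbar : ∀ b : 𝒳, ∑ a, Jbar (a, b) = p b := by
    intro b
    rw [hJbardef]
    simp only
    rw [← Finset.sum_div, Finset.sum_comm]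
    rw [Finset.sum_congr rfl fun q (_ : q ∈ univ) => hmargJ q b]
    rw [Finset.sum_const, card_univ, Fintype.card_fin, nsmul_eq_mul]
    field_simp
  have hFinNE : Nonempty (Fin n) := ⟨⟨0, hn⟩⟩
  have hTVJbar : TV Jbar K < ε := by
    have hpt : ∀ c, |Jbar c - K c| ≤ (∑ q, |Jq q c - K c|) / n := by
      intro c
      have h1 : Jbar c - K c = (∑ q, (Jq q c - K c)) / n := by
        rw [hJbardef]
        simp only
        rw [Finset.sum_sub_distrib, Finset.sum_const, card_univ, Fintype.card_fin, nsmul_eq_mul]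
        field_simp
      rw [h1, abs_div, abs_of_pos hnR]
      exact (div_le_div_iff_of_pos_right hnR).2 (Finset.abs_sum_le_sum_abs _ _)
    have hsum : ∑ c, |Jbar c - K c| ≤ (∑ q, ∑ c, |Jq q c - K c|) / n := by
      calc ∑ c, |Jbar c - K c| ≤ ∑ c, (∑ q, |Jq q c - K c|) / n :=
            Finset.sum_le_sum fun c _ => hpt c
        _ = (∑ q, ∑ c, |Jq q c - K c|) / n := by rw [← Finset.sum_div, Finset.sum_comm]
    have hlt : (∑ q, ∑ c, |Jq q c - K c|) / n < 2 * ε := by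
      have h2 : ∀ q : Fin n, ∑ c, |Jq q c - K c| < 2 * ε := by
        intro q
        have := hTVq q
        unfold TV at this
        linarith
      have h3 : ∑ q : Fin n, ∑ c, |Jq q c - K c| < ∑ _q : Fin n, 2 * ε :=
        Finset.sum_lt_sum_of_nonempty Finset.univ_nonempty fun q _ => h2 q
      rw [Finset.sum_const, card_univ, Fintype.card_fin, nsmul_eq_mul] at h3
      rw [div_lt_iff₀ hnR]
      linarith
    unfold TV
    linarith
  -- entropy comparison bounds
  have hcard : 1 ≤ Fintype.card 𝒴 := Fintype.card_pos
  have key1 : ent Jbar - ent K ≤ ε * Real.log (Fintype.card 𝒴) + hb ε := by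
    have h := ent_sub_ent_le hJbarpmf hKpmf (fun b => by rw [hmargJbar b, hmargK b])
    calc ent Jbar - ent K
        ≤ TV Jbar K * Real.log (Fintype.card 𝒴) + hb (TV Jbar K) := h
      _ ≤ ε * Real.log (Fintype.card 𝒴) + hb ε :=
          f_mono hcard (TV_nonneg _ _) (le_of_lt hTVJbar) hε
  have key2 : ∀ q, ent K - ent (Jq q) ≤ ε * Real.log (Fintype.card 𝒴) + hb ε := by
    intro q
    have h := ent_sub_ent_le hKpmf (hJqpmf q) (fun b => by rw [hmargK b, hmargJ q b])
    have hTVsymm : TV K (Jq q) = TV (Jq q) K := by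
      unfold TV
      congr 1
      exact Finset.sum_congr rfl fun c _ => abs_sub_comm _ _
    rw [hTVsymm] at h
    calc ent K - ent (Jq q)
        ≤ TV (Jq q) K * Real.log (Fintype.card 𝒴) + hb (TV (Jq q) K) := h
      _ ≤ ε * Real.log (Fintype.card 𝒴) + hb ε :=
          f_mono hcard (TV_nonneg _ _) (le_of_lt (hTVq q)) hε
  -- rewrite the goal in terms of μ
  have hshow : (fun z : Fin n × ((Fin n → 𝒳) × (Fin n → 𝒴)) =>
      ((∏ i, p (z.2.1 i)) * V z.2.1 z.2.2) / (n:ℝ)) = fun z => μ z.2 / n := rfl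
  rw [hshow]
  -- pushforward computations on the extended space
  have hpAB : pushf (fun z : Fin n × ((Fin n → 𝒳) × (Fin n → 𝒴)) => μ z.2 / n)
      (fun z => (z.2.2 z.1, z.2.1 z.1)) = Jbar := by
    funext c
    rw [pushf_eq, Fintype.sum_prod_type, hJbardef]
    simp only
    rw [Finset.sum_div]
    refine Finset.sum_congr rfl fun q _ => ?_
    rw [show Jq q c = ∑ ω, if ((ω.2 q, ω.1 q) : 𝒴 × 𝒳) = c then μ ω else 0 from
      pushf_eq μ _ c, Finset.sum_div]
    refine Finset.sum_congr rfl fun ω _ => ?_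
    split_ifs <;> simp
  have hpB : pushf (fun z : Fin n × ((Fin n → 𝒳) × (Fin n → 𝒴)) => μ z.2 / n)
      (fun z => z.2.1 z.1) = p := by
    funext b
    rw [pushf_eq, Fintype.sum_prod_type]
    have h1 : ∀ q : Fin n, (∑ ω : (Fin n → 𝒳) × (Fin n → 𝒴),
        if ω.1 q = b then μ ω / n else 0) = p b / n := by
      intro q
      rw [← hmargJ' q b, Finset.sum_div]
      refine Finset.sum_congr rfl fun ω _ => ?_
      split_ifs <;> simp
    rw [Finset.sum_congr rfl fun q _ => h1 q, Finset.sum_const, card_univ, Fintype.card_fin,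
      nsmul_eq_mul]
    field_simp
  have hpBC : pushf (fun z : Fin n × ((Fin n → 𝒳) × (Fin n → 𝒴)) => μ z.2 / n)
      (fun z => (z.2.1 z.1, z.1)) = fun bq : 𝒳 × Fin n => p bq.1 / n := by
    funext bq
    obtain ⟨b, q₀⟩ := bq
    rw [pushf_eq, Fintype.sum_prod_type]
    have h1 : ∀ q : Fin n, (∑ ω : (Fin n → 𝒳) × (Fin n → 𝒴),
        if ((ω.1 q, q) : 𝒳 × Fin n) = (b, q₀) then μ ω / n else 0)
        = if q = q₀ then p b / n else 0 := by
      intro q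
      by_cases hq : q = q₀
      · subst hq
        rw [if_pos rfl, ← hmargJ' q b, Finset.sum_div]
        refine Finset.sum_congr rfl fun ω _ => ?_
        by_cases hx : ω.1 q = b
        · rw [if_pos (by rw [hx]), if_pos hx]
        · rw [if_neg (by simp [hx]), if_neg hx]
          simp
      · rw [if_neg hq]
        refine Finset.sum_eq_zero fun ω _ => ?_
        rw [if_neg]
        intro hcon
        exact hq (congrArg Prod.snd hcon)
    rw [Finset.sum_congr rfl fun q _ => h1 q, Finset.sum_ite_eq' Finset.univ q₀
      (fun _ => p b / (n:ℝ))]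
    simp
  have hpABC : pushf (fun z : Fin n × ((Fin n → 𝒳) × (Fin n → 𝒴)) => μ z.2 / n)
      (fun z => (z.2.2 z.1, z.2.1 z.1, z.1))
      = fun t : 𝒴 × 𝒳 × Fin n => Jq t.2.2 (t.1, t.2.1) / n := by
    funext t
    obtain ⟨a, b, q₀⟩ := t
    rw [pushf_eq, Fintype.sum_prod_type]
    have h1 : ∀ q : Fin n, (∑ ω : (Fin n → 𝒳) × (Fin n → 𝒴),
        if ((ω.2 q, ω.1 q, q) : 𝒴 × 𝒳 × Fin n) = (a, b, q₀) then μ ω / n else 0)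
        = if q = q₀ then Jq q (a, b) / n else 0 := by
      intro q
      by_cases hq : q = q₀
      · subst hq
        rw [if_pos rfl, show Jq q (a, b) = ∑ ω, if ((ω.2 q, ω.1 q) : 𝒴 × 𝒳) = (a, b)
            then μ ω else 0 from pushf_eq μ _ (a, b), Finset.sum_div]
        refine Finset.sum_congr rfl fun ω _ => ?_
        by_cases hx : ((ω.2 q, ω.1 q) : 𝒴 × 𝒳) = (a, b)
        · rw [if_pos, if_pos hx]
          have h2 : ω.2 q = a := congrArg Prod.fst hx
          have h3 : ω.1 q = b := congrArg Prod.snd hx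
          rw [h2, h3]
        · rw [if_neg, if_neg hx]
          · simp
          · intro hcon
            apply hx
            simp only [Prod.mk.injEq] at hcon
            rw [hcon.1, hcon.2.1]
      · rw [if_neg hq]
        refine Finset.sum_eq_zero fun ω _ => ?_
        rw [if_neg]
        intro hcon
        have h3 : (ω.1 q, q) = (b, q₀) := congrArg Prod.snd hcon
        exact hq (congrArg Prod.snd h3)
    rw [Finset.sum_congr rfl fun q _ => h1 q, Finset.sum_ite_eq' Finset.univ q₀
      (fun q => Jq q (a, b) / (n:ℝ))]
    simp
  -- the four entropies
  have eAB : ent (pushf (fun z : Fin n × ((Fin n → 𝒳) × (Fin n → 𝒴)) => μ z.2 / n)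
      (fun z => (z.2.2 z.1, z.2.1 z.1))) = ent Jbar := by rw [hpAB]
  have eB : ent (pushf (fun z : Fin n × ((Fin n → 𝒳) × (Fin n → 𝒴)) => μ z.2 / n)
      (fun z => z.2.1 z.1)) = ent p := by rw [hpB]
  have eBC : ent (pushf (fun z : Fin n × ((Fin n → 𝒳) × (Fin n → 𝒴)) => μ z.2 / n)
      (fun z => (z.2.1 z.1, z.1))) = ent p + Real.log n := by
    rw [hpBC, ent_eq]
    rw [Fintype.sum_prod_type]
    simp only
    rw [Finset.sum_congr rfl fun b (_ : b ∈ univ) => (Finset.sum_const (Real.negMulLog (p b / n)))]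
    simp only [card_univ, Fintype.card_fin, nsmul_eq_mul]
    rw [← Finset.mul_sum, sum_negMulLog_div hn p hp.2, ent_eq]
    field_simp
  have eABC : ent (pushf (fun z : Fin n × ((Fin n → 𝒳) × (Fin n → 𝒴)) => μ z.2 / n)
      (fun z => (z.2.2 z.1, z.2.1 z.1, z.1))) = (∑ q, ent (Jq q)) / n + Real.log n := by
    rw [hpABC, ent_eq]
    have hreindex : ∑ t : 𝒴 × 𝒳 × Fin n, Real.negMulLog (Jq t.2.2 (t.1, t.2.1) / n)
        = ∑ q, ∑ c : 𝒴 × 𝒳, Real.negMulLog (Jq q c / n) := by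
      rw [Fintype.sum_prod_type]
      have h1 : ∀ a : 𝒴, ∑ bq : 𝒳 × Fin n, Real.negMulLog (Jq bq.2 (a, bq.1) / n)
          = ∑ q, ∑ b, Real.negMulLog (Jq q (a, b) / n) := by
        intro a
        rw [Fintype.sum_prod_type]
        exact Finset.sum_comm
      rw [Finset.sum_congr rfl fun a _ => h1 a, Finset.sum_comm]
      exact Finset.sum_congr rfl fun q _ =>
        (Fintype.sum_prod_type (fun c : 𝒴 × 𝒳 => Real.negMulLog (Jq q c / ↑n))).symm
    rw [hreindex]
    rw [Finset.sum_congr rfl fun q (_ : q ∈ univ) => sum_negMulLog_div hn (Jq q) ((hJqpmf q).2)]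
    rw [Finset.sum_add_distrib, ← Finset.sum_div, Finset.sum_const, card_univ, Fintype.card_fin,
      nsmul_eq_mul]
    rw [Finset.sum_congr rfl fun q (_ : q ∈ univ) => (ent_eq (Jq q)).symm]
    field_simp
  -- assemble
  have hcond : condMI (fun z : Fin n × ((Fin n → 𝒳) × (Fin n → 𝒴)) => μ z.2 / n)
      (fun z => z.2.2 z.1) (fun z => z.2.1 z.1) (fun z => z.1)
      = ent Jbar - (∑ q, ent (Jq q)) / n := by
    unfold condMI Hent
    rw [eAB, eB, eBC, eABC]
    ring
  rw [hcond]
  -- final bound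
  have hKavg : (∑ _q : Fin n, ent K) / n = ent K := by
    rw [Finset.sum_const, card_univ, Fintype.card_fin, nsmul_eq_mul]
    field_simp
  have h1 : ∑ q, (ent K - ent (Jq q)) ≤ ∑ _q : Fin n, (ε * Real.log (Fintype.card 𝒴) + hb ε) :=
    Finset.sum_le_sum fun q _ => key2 q
  rw [Finset.sum_sub_distrib, Finset.sum_const, Finset.sum_const, card_univ, Fintype.card_fin,
    nsmul_eq_mul, nsmul_eq_mul] at h1
  have h2 : ent K - (∑ q, ent (Jq q)) / n ≤ ε * Real.log (Fintype.card 𝒴) + hb ε := by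
    have h3 : ((n:ℝ) * ent K - ∑ q, ent (Jq q)) / n
        ≤ ((n:ℝ) * (ε * Real.log (Fintype.card 𝒴) + hb ε)) / n :=
      (div_le_div_iff_of_pos_right hnR).2 (by linarith)
    have hn0 : (n:ℝ) ≠ 0 := ne_of_gt hnR
    rw [sub_div, mul_div_cancel_left₀ _ hn0, mul_div_cancel_left₀ _ hn0] at h3
    exact h3
  linarith [key1, h2]
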